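/- Let Ω ⊂ ℝⁿ be open and bounded, d_x = dist(x, ∂Ω). Let u ∈ C²(Ω) with finite weighted norms, and α a variable exponent with 0 < α⁻ ≤ α(x) ≤ α⁺ < 1. Fix x ∈ Ω, 0 < μ ≤ 1/2, d = μ d_x, B = B(x,d). Then d_x² |D_{ij}u(x)| ≤ 8 μ^{α⁻} [u]*_{2,α(·),Ω} + (2/μ) [u]*_{1,Ω}, where [u]*_{2,α(·),Ω} = sup_{x≠y} d_{x,y}^{2+α(x)} |D²u(x)−D²u(y)|/|x−y|^{α(x)} and [u]*_{1,Ω} = sup_y d_y |Du(y)|. -/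

import Mathlib

open Real Set Metric

noncomputable section

/-- Values of the weighted quotients of `[u]*_{2,α(·),Ω}`, measuring the Hölder
continuity of the full second derivative with weight `d_{x,y}^{2+α(x)}`. -/
def hessSemiSet {n : ℕ} (Ω : Set (EuclideanSpace ℝ (Fin n)))
    (α : EuclideanSpace ℝ (Fin n) → ℝ) (u : EuclideanSpace ℝ (Fin n) → ℝ) : Set ℝ :=
  {r | ∃ x ∈ Ω, ∃ y ∈ Ω, x ≠ y ∧
    r = min (Metric.infDist x (frontier Ω)) (Metric.infDist y (frontier Ω)) ^ (2 + α x) *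
        (‖iteratedFDerivWithin ℝ 2 u Ω x - iteratedFDerivWithin ℝ 2 u Ω y‖ / ‖x - y‖ ^ α x)}

/-- `[u]*_{1,Ω} = sup_y d_y |Du(y)|` (as `sSup`). -/
def gradSemi {n : ℕ} (Ω : Set (EuclideanSpace ℝ (Fin n)))
    (u : EuclideanSpace ℝ (Fin n) → ℝ) : ℝ :=
  sSup ((fun y => Metric.infDist y (frontier Ω) * ‖fderivWithin ℝ u Ω y‖) '' Ω)

/-- In a real normed space, the ball around an interior point with radius the distance to the
frontier is contained in the open set. -/
lemma aux_ball_subset {E : Type*} [NormedAddCommGroup E] [NormedSpace ℝ E]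
    {Ω : Set E} (hΩ : IsOpen Ω) {x : E} (hx : x ∈ Ω) :
    Metric.ball x (Metric.infDist x (frontier Ω)) ⊆ Ω := by
  set r := Metric.infDist x (frontier Ω) with hr
  rcases le_or_gt r 0 with h | h
  · simp [Metric.ball_eq_empty.2 h]
  intro y hy
  by_contra hyΩ
  have hdisj : Disjoint (Metric.ball x r) (frontier Ω) := Metric.disjoint_ball_infDist
  have hcover : Metric.ball x r ⊆ Ω ∪ (closure Ω)ᶜ := by
    intro z hz
    by_cases hz1 : z ∈ closure Ω
    · left
      have hzf : z ∉ frontier Ω := Set.disjoint_left.1 hdisj hz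
      have hzi : z ∈ interior Ω := by
        by_contra hzi
        exact hzf ⟨hz1, hzi⟩
      rwa [hΩ.interior_eq] at hzi
    · right; exact hz1
  have hy' : y ∈ (closure Ω)ᶜ := by
    intro hyc
    have hyf : y ∉ frontier Ω := Set.disjoint_left.1 hdisj hy
    refine hyf ⟨hyc, ?_⟩
    rw [hΩ.interior_eq]; exact hyΩ
  have hconn := (convex_ball x r).isPreconnected Ω (closure Ω)ᶜ hΩ
    isClosed_closure.isOpen_compl hcover ⟨x, Metric.mem_ball_self h, hx⟩ ⟨y, hy, hy'⟩
  obtain ⟨z, _, hz1, hz2⟩ := hconn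
  exact hz2 (subset_closure hz1)

set_option maxHeartbeats 1000000 in
theorem stmt_16 {n : ℕ} (Ω : Set (EuclideanSpace ℝ (Fin n)))
    (hΩo : IsOpen Ω) (hΩb : Bornology.IsBounded Ω)
    (u α : EuclideanSpace ℝ (Fin n) → ℝ) (αm αp : ℝ) (hαm : 0 < αm) (hαp : αp < 1)
    (hα : ∀ x ∈ Ω, αm ≤ α x ∧ α x ≤ αp)
    (hu : ContDiffOn ℝ 2 u Ω)
    (hb2 : BddAbove (hessSemiSet Ω α u))
    (hb1 : BddAbove ((fun y => Metric.infDist y (frontier Ω) * ‖fderivWithin ℝ u Ω y‖) '' Ω))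
    (x : EuclideanSpace ℝ (Fin n)) (hx : x ∈ Ω)
    (μ : ℝ) (hμ0 : 0 < μ) (hμ : μ ≤ 1 / 2) :
    ∀ i j : Fin n,
      Metric.infDist x (frontier Ω) ^ 2 *
          |iteratedFDerivWithin ℝ 2 u Ω x ![EuclideanSpace.single i 1, EuclideanSpace.single j 1]| ≤
        8 * μ ^ αm * sSup (hessSemiSet Ω α u) + 2 / μ * gradSemi Ω u := by
  intro i j
  set dx := Metric.infDist x (frontier Ω) with hdx_def
  set e : EuclideanSpace ℝ (Fin n) := EuclideanSpace.single i 1 with he_def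
  set f : EuclideanSpace ℝ (Fin n) := EuclideanSpace.single j 1 with hf_def
  have hne : ‖e‖ = 1 := by rw [he_def, EuclideanSpace.norm_single]; norm_num
  have hnf : ‖f‖ = 1 := by rw [hf_def, EuclideanSpace.norm_single]; norm_num
  have hennz : e ≠ 0 := fun h => by simp [h] at hne
  haveI : Nontrivial (EuclideanSpace ℝ (Fin n)) := nontrivial_of_ne e 0 hennz
  have hΩuniv : Ω ≠ univ := fun h =>
    NormedSpace.unbounded_univ ℝ (EuclideanSpace ℝ (Fin n)) (h ▸ hΩb)
  have hfr : (frontier Ω).Nonempty := nonempty_frontier_iff.2 ⟨⟨x, hx⟩, hΩuniv⟩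
  have hdx : 0 < dx := by
    refine (isClosed_frontier.notMem_iff_infDist_pos hfr).1 ?_
    rw [hΩo.frontier_eq]
    exact fun h => h.2 hx
  set d := μ * dx with hd_def
  have hd0 : 0 < d := mul_pos hμ0 hdx
  have hddx : d ≤ dx / 2 := by
    rw [hd_def]; nlinarith
  have hball : ∀ y : EuclideanSpace ℝ (Fin n), dist y x ≤ d → y ∈ Ω := fun y hy =>
    aux_ball_subset hΩo hx (by rw [mem_ball]; linarith)
  have hinf : ∀ y : EuclideanSpace ℝ (Fin n), dist y x ≤ d →
      dx / 2 ≤ Metric.infDist y (frontier Ω) := by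
    intro y hy
    have h1 : dx ≤ Metric.infDist y (frontier Ω) + dist x y :=
      Metric.infDist_le_infDist_add_dist
    rw [dist_comm] at h1
    linarith
  set g : EuclideanSpace ℝ (Fin n) → (EuclideanSpace ℝ (Fin n)) →L[ℝ] ℝ := fderiv ℝ u with hg_def
  have hgdiff : ∀ y ∈ Ω, HasFDerivAt g (fderiv ℝ g y) y := by
    intro y hy
    have h2 : ContDiffAt ℝ 2 u y := hu.contDiffAt (hΩo.mem_nhds hy)
    have h1 : ContDiffAt ℝ 1 g y := h2.fderiv_right (by norm_num)
    exact (h1.differentiableAt one_ne_zero).hasFDerivAt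
  have hiter : ∀ y ∈ Ω, ∀ v w : EuclideanSpace ℝ (Fin n),
      iteratedFDerivWithin ℝ 2 u Ω y ![v, w] = fderiv ℝ g y v w := by
    intro y hy v w
    rw [iteratedFDerivWithin_of_isOpen 2 hΩo hy, iteratedFDeriv_two_apply]
    simp [hg_def]
  set S1 := gradSemi Ω u with hS1_def
  have hgy : ∀ y ∈ Ω, Metric.infDist y (frontier Ω) * ‖g y‖ ≤ S1 := by
    intro y hy
    have h1 : Metric.infDist y (frontier Ω) * ‖fderivWithin ℝ u Ω y‖ ≤ S1 :=
      le_csSup hb1 ⟨y, hy, rfl⟩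
    rwa [fderivWithin_of_isOpen hΩo hy] at h1
  have hgb : ∀ y : EuclideanSpace ℝ (Fin n), dist y x ≤ d → ‖g y‖ ≤ 2 * S1 / dx := by
    intro y hy
    have h1 := hgy y (hball y hy)
    have h2 := hinf y hy
    have h3 : (0:ℝ) ≤ ‖g y‖ := norm_nonneg _
    rw [le_div_iff₀ hdx]
    nlinarith [mul_nonneg (sub_nonneg.2 h2) h3]
  set ψ : ℝ → ℝ := fun t => g (x + t • e) f with hψ_def
  have hmem : ∀ t : ℝ, |t| ≤ d → x + t • e ∈ Ω := by
    intro t ht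
    apply hball
    rw [dist_eq_norm, add_sub_cancel_left, norm_smul, hne, mul_one, Real.norm_eq_abs]
    exact ht
  have hψd : ∀ t : ℝ, |t| ≤ d → HasDerivAt ψ (fderiv ℝ g (x + t • e) e f) t := by
    intro t ht
    have hy := hmem t ht
    have hline : HasDerivAt (fun s : ℝ => x + s • e) e t := by
      simpa using ((hasDerivAt_id t).smul_const e).const_add x
    have h1 : HasDerivAt (fun s : ℝ => g (x + s • e)) (fderiv ℝ g (x + t • e) e) t :=
      (hgdiff _ hy).comp_hasDerivAt t hline
    have h2 := h1.clm_apply (hasDerivAt_const t f)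
    simpa using h2
  obtain ⟨c, hc, hceq⟩ := exists_hasDerivAt_eq_slope ψ
      (fun t => fderiv ℝ g (x + t • e) e f)
      (by linarith : -d < d)
      (fun t ht => by
        have := hψd t (abs_le.2 ⟨ht.1, ht.2⟩)
        exact this.continuousAt.continuousWithinAt)
      (fun t ht => hψd t (abs_le.2 ⟨le_of_lt ht.1, le_of_lt ht.2⟩))
  set z := x + c • e with hz_def
  have hcd : |c| ≤ d := abs_le.2 ⟨le_of_lt hc.1, le_of_lt hc.2⟩
  have hzΩ : z ∈ Ω := hmem c hcd
  have hdistzx : dist z x ≤ d := by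
    rw [hz_def, dist_eq_norm, add_sub_cancel_left, norm_smul, hne, mul_one, Real.norm_eq_abs]
    exact hcd
  have hsec : |fderiv ℝ g z e f| ≤ 2 * S1 / (d * dx) := by
    rw [hceq]
    have habs1 : ∀ t : ℝ, |t| ≤ d → |ψ t| ≤ 2 * S1 / dx := by
      intro t ht
      have h1 : |ψ t| ≤ ‖g (x + t • e)‖ := by
        rw [hψ_def, ← Real.norm_eq_abs]
        calc ‖g (x + t • e) f‖ ≤ ‖g (x + t • e)‖ * ‖f‖ := (g (x + t • e)).le_opNorm f
        _ = ‖g (x + t • e)‖ := by rw [hnf, mul_one]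
      refine h1.trans (hgb _ ?_)
      rw [dist_eq_norm, add_sub_cancel_left, norm_smul, hne, mul_one, Real.norm_eq_abs]
      exact ht
    have h1 := habs1 d (by rw [abs_of_pos hd0])
    have h2 := habs1 (-d) (by rw [abs_neg, abs_of_pos hd0])
    have hsub : |ψ d - ψ (-d)| ≤ 4 * S1 / dx := by
      calc |ψ d - ψ (-d)| ≤ |ψ d| + |ψ (-d)| := abs_sub _ _
      _ ≤ 2 * S1 / dx + 2 * S1 / dx := add_le_add h1 h2
      _ = 4 * S1 / dx := by ring
    have hden : d - -d = 2 * d := by ring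
    rw [hden, abs_div, abs_of_pos (by linarith : (0:ℝ) < 2 * d)]
    rw [div_le_div_iff₀ (by linarith) (by positivity)]
    have hsub' : |ψ d - ψ (-d)| * dx ≤ 4 * S1 := by
      rw [le_div_iff₀ hdx] at hsub; linarith
    nlinarith [abs_nonneg (ψ d - ψ (-d))]
  set S2 := sSup (hessSemiSet Ω α u) with hS2_def
  have hS2nonneg : 0 ≤ S2 := by
    have hy0 : x + (d / 2) • e ∈ Ω := hmem (d / 2) (by rw [abs_of_pos (by linarith)]; linarith)
    have hxy0 : x ≠ x + (d / 2) • e := by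
      intro h
      have h2 : (d / 2) • e = 0 := (left_eq_add.1 h)
      rcases smul_eq_zero.1 h2 with h3 | h3
      · linarith
      · exact hennz h3
    refine le_trans ?_ (le_csSup hb2 ⟨x, hx, _, hy0, hxy0, rfl⟩)
    apply mul_nonneg (Real.rpow_nonneg (le_min Metric.infDist_nonneg Metric.infDist_nonneg) _)
    exact div_nonneg (norm_nonneg _) (Real.rpow_nonneg (norm_nonneg _) _)
  have hholder : dx ^ 2 * |iteratedFDerivWithin ℝ 2 u Ω x ![e, f] -
      iteratedFDerivWithin ℝ 2 u Ω z ![e, f]| ≤ 8 * μ ^ αm * S2 := by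
    rcases eq_or_ne z x with hzx | hzx
    · rw [hzx, sub_self, abs_zero, mul_zero]
      exact mul_nonneg (mul_nonneg (by norm_num) (Real.rpow_nonneg hμ0.le αm)) hS2nonneg
    · set a := α x with ha_def
      have ham : αm ≤ a := (hα x hx).1
      have hap : a ≤ αp := (hα x hx).2
      have ha0 : 0 < a := lt_of_lt_of_le hαm ham
      set Hd := ‖iteratedFDerivWithin ℝ 2 u Ω x - iteratedFDerivWithin ℝ 2 u Ω z‖ with hHd_def
      set D := ‖x - z‖ with hD_def
      have hD0 : 0 < D := by
        rw [hD_def]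
        exact norm_pos_iff.2 (sub_ne_zero.2 (Ne.symm hzx))
      have hDd : D ≤ d := by
        rw [hD_def, hz_def]
        have h1 : x - (x + c • e) = -(c • e) := by abel
        rw [h1, norm_neg, norm_smul, hne, mul_one, Real.norm_eq_abs]
        exact hcd
      have happ : |iteratedFDerivWithin ℝ 2 u Ω x ![e, f] -
          iteratedFDerivWithin ℝ 2 u Ω z ![e, f]| ≤ Hd := by
        have h1 : iteratedFDerivWithin ℝ 2 u Ω x ![e, f] -
            iteratedFDerivWithin ℝ 2 u Ω z ![e, f] =
            (iteratedFDerivWithin ℝ 2 u Ω x - iteratedFDerivWithin ℝ 2 u Ω z) ![e, f] := by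
          simp
        rw [h1, ← Real.norm_eq_abs]
        refine le_trans (ContinuousMultilinearMap.le_opNorm _ _) ?_
        rw [hHd_def]
        have h2 : ∏ k : Fin 2, ‖(![e, f]) k‖ = 1 := by
          rw [Fin.prod_univ_two]
          simp [hne, hnf]
        rw [h2, mul_one]
      set m := min dx (Metric.infDist z (frontier Ω)) with hm_def
      have hmin : dx / 2 ≤ m := le_min (by linarith) (hinf z hdistzx)
      have hm0 : 0 < m := lt_of_lt_of_le (by linarith) hmin
      have hsup : m ^ ((2:ℝ) + a) * (Hd / D ^ a) ≤ S2 :=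
        le_csSup hb2 ⟨x, hx, z, hzΩ, Ne.symm hzx, rfl⟩
      have hm2a : (0:ℝ) < m ^ ((2:ℝ) + a) := Real.rpow_pos_of_pos hm0 _
      have hDa : (0:ℝ) < D ^ a := Real.rpow_pos_of_pos hD0 a
      have hq : Hd / D ^ a ≤ S2 / m ^ ((2:ℝ) + a) := by
        rw [le_div_iff₀ hm2a]
        nlinarith [hsup]
      have hHd_le : Hd ≤ S2 / m ^ ((2:ℝ) + a) * D ^ a := by
        have h3 := mul_le_mul_of_nonneg_right hq hDa.le
        rwa [div_mul_cancel₀ _ (ne_of_gt hDa)] at h3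
      have hP : (0:ℝ) < dx / 2 := by linarith
      have h2a : (dx / 2) ^ ((2:ℝ) + a) = (dx / 2) ^ (2:ℕ) * (dx / 2) ^ a := by
        have hcast : (2:ℝ) = ((2:ℕ):ℝ) := by norm_num
        rw [Real.rpow_add hP, hcast, Real.rpow_natCast]
      have hda : d ^ a = μ ^ a * dx ^ a := by
        rw [hd_def, Real.mul_rpow hμ0.le hdx.le]
      have hdxa : dx ^ a = (dx / 2) ^ a * (2:ℝ) ^ a := by
        rw [← Real.mul_rpow hP.le (by norm_num : (0:ℝ) ≤ 2)]
        congr 1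
        ring
      have hPa : ((dx / 2) ^ a : ℝ) ≠ 0 := ne_of_gt (Real.rpow_pos_of_pos hP a)
      have e2 : dx ^ 2 * d ^ a / ((dx / 2) ^ ((2:ℝ) + a)) = 4 * (2:ℝ) ^ a * μ ^ a := by
        rw [h2a, hda, hdxa]
        field_simp
        ring
      have hfin : 4 * (2:ℝ) ^ a * μ ^ a ≤ 8 * μ ^ αm := by
        have h1 : (2:ℝ) ^ a ≤ 2 := by
          calc (2:ℝ) ^ a ≤ (2:ℝ) ^ (1:ℝ) :=
            Real.rpow_le_rpow_of_exponent_le one_le_two (by linarith)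
          _ = 2 := Real.rpow_one 2
        have h2 : μ ^ a ≤ μ ^ αm := Real.rpow_le_rpow_of_exponent_ge hμ0 (by linarith) ham
        have h3 : (0:ℝ) ≤ μ ^ a := Real.rpow_nonneg hμ0.le a
        have h4 : (0:ℝ) ≤ (2:ℝ) ^ a := Real.rpow_nonneg (by norm_num) a
        nlinarith [Real.rpow_nonneg hμ0.le αm]
      calc dx ^ 2 * |iteratedFDerivWithin ℝ 2 u Ω x ![e, f] -
          iteratedFDerivWithin ℝ 2 u Ω z ![e, f]|
          ≤ dx ^ 2 * Hd := mul_le_mul_of_nonneg_left happ (by positivity)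
        _ ≤ dx ^ 2 * (S2 / m ^ ((2:ℝ) + a) * D ^ a) :=
            mul_le_mul_of_nonneg_left hHd_le (by positivity)
        _ ≤ dx ^ 2 * (S2 / (dx / 2) ^ ((2:ℝ) + a) * d ^ a) := by
            refine mul_le_mul_of_nonneg_left ?_ (by positivity)
            refine mul_le_mul ?_ (Real.rpow_le_rpow hD0.le hDd ha0.le) hDa.le
              (div_nonneg hS2nonneg (Real.rpow_nonneg hP.le _))
            exact div_le_div_of_nonneg_left hS2nonneg (Real.rpow_pos_of_pos hP _)
              (Real.rpow_le_rpow hP.le hmin (by linarith))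
        _ = S2 * (dx ^ 2 * d ^ a / ((dx / 2) ^ ((2:ℝ) + a))) := by ring
        _ = S2 * (4 * (2:ℝ) ^ a * μ ^ a) := by rw [e2]
        _ ≤ 8 * μ ^ αm * S2 := by
            rw [mul_comm S2 _]
            exact mul_le_mul_of_nonneg_right hfin hS2nonneg
  have hxef := hiter x hx e f
  have hzef := hiter z hzΩ e f
  have htri : |iteratedFDerivWithin ℝ 2 u Ω x ![e, f]| ≤
      |iteratedFDerivWithin ℝ 2 u Ω x ![e, f] - iteratedFDerivWithin ℝ 2 u Ω z ![e, f]| +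
      |iteratedFDerivWithin ℝ 2 u Ω z ![e, f]| := by
    have h1 := abs_add_le (iteratedFDerivWithin ℝ 2 u Ω x ![e, f] -
      iteratedFDerivWithin ℝ 2 u Ω z ![e, f]) (iteratedFDerivWithin ℝ 2 u Ω z ![e, f])
    rwa [sub_add_cancel] at h1
  have hlast : dx ^ 2 * |iteratedFDerivWithin ℝ 2 u Ω z ![e, f]| ≤ 2 / μ * S1 := by
    rw [hzef]
    have h5 : dx ^ 2 * (2 * S1 / (d * dx)) = 2 / μ * S1 := by
      rw [hd_def]
      field_simp
    calc dx ^ 2 * |fderiv ℝ g z e f| ≤ dx ^ 2 * (2 * S1 / (d * dx)) :=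
        mul_le_mul_of_nonneg_left hsec (by positivity)
      _ = 2 / μ * S1 := h5
  calc dx ^ 2 * |iteratedFDerivWithin ℝ 2 u Ω x ![e, f]|
      ≤ dx ^ 2 * (|iteratedFDerivWithin ℝ 2 u Ω x ![e, f] -
          iteratedFDerivWithin ℝ 2 u Ω z ![e, f]| +
          |iteratedFDerivWithin ℝ 2 u Ω z ![e, f]|) :=
        mul_le_mul_of_nonneg_left htri (by positivity)
    _ = dx ^ 2 * |iteratedFDerivWithin ℝ 2 u Ω x ![e, f] -
          iteratedFDerivWithin ℝ 2 u Ω z ![e, f]| +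
        dx ^ 2 * |iteratedFDerivWithin ℝ 2 u Ω z ![e, f]| := by ring
    _ ≤ 8 * μ ^ αm * S2 + 2 / μ * S1 := add_le_add hholder hlast
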